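/- Composition of sijections is associative: for sijections φ : S ⇒ T, ψ : T ⇒ U, ξ : U ⇒ V, one has ξ ∘ (ψ ∘ φ) = (ξ ∘ ψ) ∘ φ. -/

import Mathlib

/-- A signed set: a pair of (disjoint) finite sets. -/
abbrev SignedSet (α : Type) := Finset α × Finset α

variable {α : Type}

/-- Membership in the plus part `S⁺ ⊔ T⁻` of the tagged disjoint union of the supports:
tag `false` means the element lives in `S`, tag `true` means it lives in `T`. -/
def memP (S T : SignedSet α) (p : α × Bool) : Prop :=
  (p.2 = false ∧ p.1 ∈ S.1) ∨ (p.2 = true ∧ p.1 ∈ T.2)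

/-- Membership in the minus part `S⁻ ⊔ T⁺`. -/
def memM (S T : SignedSet α) (p : α × Bool) : Prop :=
  (p.2 = false ∧ p.1 ∈ S.2) ∨ (p.2 = true ∧ p.1 ∈ T.1)

/-- The support of the pair `(S, T)`, as a tagged union. -/
def valid (S T : SignedSet α) (p : α × Bool) : Prop := memP S T p ∨ memM S T p

/-- `f` encodes a sijection from `S` to `T`: an involution on the tagged disjoint union
of the supports which restricts to a bijection between `S⁺ ⊔ T⁻` and `S⁻ ⊔ T⁺`
(and which is the identity off the support). -/
structure IsSij (S T : SignedSet α) (f : α × Bool → α × Bool) : Prop where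
  invol : ∀ p, f (f p) = p
  mapsP : ∀ p, memP S T p → memM S T (f p)
  mapsM : ∀ p, memM S T p → memP S T (f p)
  fix : ∀ p, ¬ valid S T p → f p = p

/-- One step of the alternating sequence `s, φ(s), ψ(φ(s)), φ(ψ(φ(s))), …` used to
compose sijections `φ : S ⇒ T` and `ψ : T ⇒ U`. A state records the current element,
its location (`0` = in `S`, `1` = in `T`, `2` = in `U`) and which map is to be applied
next (`true` = `φ`, `false` = `ψ`); the step is `none` exactly when the next map is not
defined at the current element, i.e. when the current element is the last well-defined
one of the sequence. -/
def step (f g : α × Bool → α × Bool) : α × Fin 3 × Bool → Option (α × Fin 3 × Bool) :=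
  fun q =>
    match q with
    | (x, loc, nf) =>
      if nf then
        if loc = 0 then
          some ((f (x, false)).1, if (f (x, false)).2 then 1 else 0, false)
        else if loc = 1 then
          some ((f (x, true)).1, if (f (x, true)).2 then 1 else 0, false)
        else none
      else
        if loc = 1 then
          some ((g (x, false)).1, if (g (x, false)).2 then 2 else 1, true)
        else if loc = 2 then
          some ((g (x, true)).1, if (g (x, true)).2 then 2 else 1, true)
        else none

/-- The alternating sequence, as a partially defined sequence of states. -/
def seq (f g : α × Bool → α × Bool) (st : α × Fin 3 × Bool) : ℕ → Option (α × Fin 3 × Bool)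
  | 0 => some st
  | n + 1 => (seq f g st n).bind (step f g)

/-- The starting state: an element of `S` (tag `false`) starts by applying `φ`,
an element of `U` (tag `true`) starts by applying `ψ`. -/
def start (p : α × Bool) : α × Fin 3 × Bool := (p.1, if p.2 then 2 else 0, !p.2)

/-- `y` (tagged: `false` = in `S`, `true` = in `U`) is the last well-defined element of
the alternating sequence started at `p`. -/
def IsLast (f g : α × Bool → α × Bool) (p : α × Bool) (y : α × Bool) : Prop :=
  ∃ n st, seq f g (start p) n = some st ∧ step f g st = none ∧
    st.1 = y.1 ∧ st.2.1 = (if y.2 then 2 else 0)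

open Classical in
/-- The composition `ψ ∘ φ` of (the encodings of) two sijections: each element is sent
to the last well-defined element of the alternating sequence
`s, φ(s), ψ(φ(s)), φ(ψ(φ(s))), …`. -/
noncomputable def scomp (f g : α × Bool → α × Bool) : α × Bool → α × Bool :=
  fun p => if h : ∃ y, IsLast f g p y then h.choose else p


namespace SijAux

variable {β : Type*}

/-- Iterate a partial step function. -/
def iter (σ : β → Option β) (st : β) : ℕ → Option β
  | 0 => some st
  | n + 1 => (iter σ st n).bind σ

theorem iter_add (σ : β → Option β) (st : β) (m n : ℕ) :
    iter σ st (m + n) = (iter σ st m).bind (fun s => iter σ s n) := by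
  induction n with
  | zero => simp [iter]
  | succ n ih =>
      rw [← Nat.add_assoc, iter, ih]
      cases hm : iter σ st m with
      | none => simp
      | some s => simp [iter]

theorem iter_none_succ (σ : β → Option β) (st : β) (n : ℕ) (h : iter σ st n = none) :
    iter σ st (n + 1) = none := by rw [iter, h]; rfl

theorem iter_none_of_terminal (σ : β → Option β) (st a : β) (n m : ℕ)
    (h : iter σ st n = some a) (ha : σ a = none) (hm : n < m) : iter σ st m = none := by
  obtain ⟨k, rfl⟩ : ∃ k, m = n + 1 + k := ⟨m - (n+1), by omega⟩
  rw [iter_add]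
  have h1 : iter σ st (n + 1) = none := by rw [iter, h]; simpa using ha
  rw [h1]; rfl

theorem terminal_unique (σ : β → Option β) (st a b : β) (n m : ℕ)
    (ha : iter σ st n = some a) (ha' : σ a = none)
    (hb : iter σ st m = some b) (hb' : σ b = none) : a = b := by
  rcases lt_trichotomy n m with hlt | rfl | hlt
  · rw [iter_none_of_terminal σ st a n m ha ha' hlt] at hb; cases hb
  · rw [ha] at hb; cases hb; rfl
  · rw [iter_none_of_terminal σ st b m n hb hb' hlt] at ha; cases ha

theorem iter_index_inj (σ : β → Option β) (s₀ : β)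
    (hinj : ∀ a b c, σ a = some c → σ b = some c → a = b)
    (hns : ∀ a, σ a ≠ some s₀) :
    ∀ n m a, iter σ s₀ n = some a → iter σ s₀ m = some a → n = m := by
  intro n
  induction n with
  | zero =>
      intro m a h0 hm
      cases h0
      cases m with
      | zero => rfl
      | succ m =>
          rw [iter] at hm
          rcases Option.bind_eq_some_iff.mp hm with ⟨b, _, hb2⟩
          exact absurd hb2 (hns b)
  | succ n ih =>
      intro m a hn hm
      cases m with
      | zero =>
          cases hm
          rw [iter] at hn
          rcases Option.bind_eq_some_iff.mp hn with ⟨b, _, hb2⟩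
          exact absurd hb2 (hns b)
      | succ m =>
          rw [iter] at hn hm
          rcases Option.bind_eq_some_iff.mp hn with ⟨b, hb1, hb2⟩
          rcases Option.bind_eq_some_iff.mp hm with ⟨c, hc1, hc2⟩
          have : b = c := hinj b c a hb2 hc2
          subst this
          rw [ih m b hb1 hc1]

/-- Generic pigeonhole termination. -/
theorem exists_terminal (σ : β → Option β) (s₀ : β) (K : Set β) (hK : K.Finite)
    (h0 : s₀ ∈ K) (hinv : ∀ a b, a ∈ K → σ a = some b → b ∈ K)
    (hinj : ∀ a b c, σ a = some c → σ b = some c → a = b)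
    (hns : ∀ a, σ a ≠ some s₀) :
    ∃ n st, iter σ s₀ n = some st ∧ σ st = none := by
  by_contra hcon
  push_neg at hcon
  have hall : ∀ n, ∃ st, iter σ s₀ n = some st ∧ st ∈ K := by
    intro n
    induction n with
    | zero => exact ⟨s₀, rfl, h0⟩
    | succ n ih =>
        rcases ih with ⟨st, hs, hk⟩
        rcases Option.ne_none_iff_exists'.mp (hcon n st hs) with ⟨st', hst'⟩
        exact ⟨st', by rw [iter, hs]; simpa using hst', hinv st st' hk hst'⟩
  choose v hv hvK using hall
  have hinjv : Function.Injective v := by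
    intro n m hnm
    exact iter_index_inj σ s₀ hinj hns n m (v n) (hv n) (hnm ▸ hv m)
  exact (Set.infinite_of_injective_forall_mem hinjv hvK) hK

/-- Simulation: a step-preserving map transports runs. -/
theorem iter_sim {γ : Type*} (σ : β → Option β) (τ : γ → Option γ) (ι : β → γ)
    (hsim : ∀ a b, σ a = some b → τ (ι a) = some (ι b)) :
    ∀ n a b, iter σ a n = some b → iter τ (ι a) n = some (ι b) := by
  intro n
  induction n with
  | zero => intro a b h; cases h; rfl
  | succ n ih =>
      intro a b h
      rw [iter] at h
      rcases Option.bind_eq_some_iff.mp h with ⟨c, hc1, hc2⟩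
      rw [iter, ih a c hc1]
      simpa using hsim c b hc2

end SijAux


namespace SijAux

variable {α : Type}

def rstep (f g : α × Bool → α × Bool) : α × Fin 3 × Bool → α × Fin 3 × Bool :=
  fun q => match q with
  | (y, loc, nf) =>
    if nf then
      ((g (y, decide (loc = 2))).1, if (g (y, decide (loc = 2))).2 then 2 else 1, false)
    else
      ((f (y, decide (loc = 1))).1, if (f (y, decide (loc = 1))).2 then 1 else 0, true)

theorem step_eq_none_iff (f g : α × Bool → α × Bool) (st : α × Fin 3 × Bool) :
    step f g st = none ↔ (st.2.1 = 0 ∧ st.2.2 = false) ∨ (st.2.1 = 2 ∧ st.2.2 = true) := by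
  obtain ⟨x, loc, nf⟩ := st
  fin_cases loc <;> cases nf <;> simp [step]

theorem rstep_step {f g : α × Bool → α × Bool} (hf : ∀ p, f (f p) = p) (hg : ∀ p, g (g p) = p) :
    ∀ a c, step f g a = some c → rstep f g c = a := by
  rintro ⟨x, loc, nf⟩ c h
  fin_cases loc <;> cases nf <;> simp [step] at h
  · rcases hfx : f (x, false) with ⟨y, b⟩
    rw [hfx] at h
    have h2 := hf (x, false); rw [hfx] at h2
    subst h
    cases b <;> simp [rstep, h2]
  · rcases hgx : g (x, false) with ⟨y, b⟩
    rw [hgx] at h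
    have h2 := hg (x, false); rw [hgx] at h2
    subst h
    cases b <;> simp [rstep, h2]
  · rcases hfx : f (x, true) with ⟨y, b⟩
    rw [hfx] at h
    have h2 := hf (x, true); rw [hfx] at h2
    subst h
    cases b <;> simp [rstep, h2]
  · rcases hgx : g (x, true) with ⟨y, b⟩
    rw [hgx] at h
    have h2 := hg (x, true); rw [hgx] at h2
    subst h
    cases b <;> simp [rstep, h2]

theorem step_inj {f g : α × Bool → α × Bool} (hf : ∀ p, f (f p) = p) (hg : ∀ p, g (g p) = p) :
    ∀ a b c, step f g a = some c → step f g b = some c → a = b := by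
  intro a b c ha hb
  rw [← rstep_step hf hg a c ha, ← rstep_step hf hg b c hb]

theorem step_start_ne_none (f g : α × Bool → α × Bool) (p : α × Bool) :
    step f g (start p) ≠ none := by
  obtain ⟨x, b⟩ := p
  cases b <;> simp [start, step]

theorem step_not_start (f g : α × Bool → α × Bool) (p : α × Bool) :
    ∀ a, step f g a ≠ some (start p) := by
  rintro ⟨x, loc, nf⟩ h
  obtain ⟨z, b⟩ := p
  fin_cases loc <;> cases nf <;> cases b <;>
    simp [step, start, Prod.ext_iff] at h
  all_goals (rcases h with ⟨-, h2⟩; split at h2 <;> exact absurd h2 (by decide))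

theorem seq_eq_iter (f g : α × Bool → α × Bool) (st : α × Fin 3 × Bool) (n : ℕ) :
    seq f g st n = iter (step f g) st n := by
  induction n with
  | zero => rfl
  | succ n ih => rw [seq, iter, ih]

end SijAux


namespace SijAux

variable {α : Type}

theorem isLast_unique {f g : α × Bool → α × Bool} {p y y' : α × Bool}
    (h : IsLast f g p y) (h' : IsLast f g p y') : y = y' := by
  obtain ⟨n, st, hseq, hnone, h1, h2⟩ := h
  obtain ⟨n', st', hseq', hnone', h1', h2'⟩ := h'
  rw [seq_eq_iter] at hseq hseq'
  have hst : st = st' :=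
    terminal_unique (step f g) (start p) st st' n n' hseq hnone hseq' hnone'
  subst hst
  have e : (if y.2 then (2 : Fin 3) else 0) = (if y'.2 then 2 else 0) := by rw [← h2, ← h2']
  have hb : y.2 = y'.2 := by
    cases hy : y.2 <;> cases hy' : y'.2 <;>
      first | rfl | (rw [hy, hy'] at e; exact absurd e (by decide))
  obtain ⟨y1, y2⟩ := y
  obtain ⟨z1, z2⟩ := y'
  simp only [Prod.mk.injEq]
  exact ⟨h1.symm.trans h1', hb⟩

theorem scomp_isLast {f g : α × Bool → α × Bool} {p : α × Bool}
    (h : ∃ y, IsLast f g p y) : IsLast f g p (scomp f g p) := by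
  rw [scomp, dif_pos h]
  exact h.choose_spec

theorem scomp_eq_of {f g : α × Bool → α × Bool} {p y : α × Bool}
    (h : IsLast f g p y) : scomp f g p = y :=
  isLast_unique (scomp_isLast ⟨y, h⟩) h

theorem img_mem {S T : SignedSet α} {f : α × Bool → α × Bool} (hf : IsSij S T f)
    (q : α × Bool) :
    (f q).1 ∈ (↑S.1 ∪ ↑S.2 ∪ ↑T.1 ∪ ↑T.2 : Set α) ∨ f q = q := by
  by_cases hv : valid S T q
  · left
    rcases hv with hv | hv
    · rcases hf.mapsP q hv with ⟨_, hm⟩ | ⟨_, hm⟩ <;> simp [hm]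
    · rcases hf.mapsM q hv with ⟨_, hm⟩ | ⟨_, hm⟩ <;> simp [hm]
  · right; exact hf.fix q hv

theorem not_valid_left {S T : SignedSet α} {x : α}
    (hx : x ∉ (↑S.1 : Set α) ∧ x ∉ (↑S.2 : Set α)) : ¬ valid S T (x, false) := by
  rintro (h | h) <;> rcases h with ⟨hb, hm⟩ | ⟨hb, hm⟩ <;> simp_all [memP, memM]

theorem not_valid_right {S T : SignedSet α} {x : α}
    (hx : x ∉ (↑T.1 : Set α) ∧ x ∉ (↑T.2 : Set α)) : ¬ valid S T (x, true) := by
  rintro (h | h) <;> rcases h with ⟨hb, hm⟩ | ⟨hb, hm⟩ <;> simp_all [memP, memM]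

theorem exists_isLast {S T U : SignedSet α} {f g : α × Bool → α × Bool}
    (hf : IsSij S T f) (hg : IsSij T U g) (p : α × Bool) : ∃ y, IsLast f g p y := by
  classical
  set A : Set α := ↑S.1 ∪ ↑S.2 ∪ ↑T.1 ∪ ↑T.2 ∪ ↑U.1 ∪ ↑U.2 with hA
  have hAfin : A.Finite := by
    simp only [hA]
    exact (((((S.1.finite_toSet.union S.2.finite_toSet).union T.1.finite_toSet).union
      T.2.finite_toSet).union U.1.finite_toSet).union U.2.finite_toSet)
  have hfA : ∀ q : α × Bool, (f q).1 ∈ A ∨ f q = q := by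
    intro q
    rcases img_mem hf q with hm | hm
    · left; revert hm; simp only [hA, Set.mem_union]; tauto
    · right; exact hm
  have hgA : ∀ q : α × Bool, (g q).1 ∈ A ∨ g q = q := by
    intro q
    rcases img_mem hg q with hm | hm
    · left; revert hm; simp only [hA, Set.mem_union]; tauto
    · right; exact hm
  have hterm : ∃ n st, iter (step f g) (start p) n = some st ∧ step f g st = none := by
    by_cases hp : p.1 ∈ A
    · apply exists_terminal (step f g) (start p) {st : α × Fin 3 × Bool | st.1 ∈ A}
      · exact (hAfin.prod (Set.finite_univ (α := Fin 3 × Bool))).subset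
          (by rintro ⟨x, lb⟩ hx; exact ⟨hx, trivial⟩)
      · simpa [start] using hp
      · rintro ⟨x, loc, nf⟩ b ha hb
        simp only [Set.mem_setOf_eq] at ha ⊢
        fin_cases loc <;> cases nf <;> simp [step] at hb <;> rw [← hb] <;>
          first
          | exact (hfA (x, false)).elim (fun hm => hm) (fun hm => by rw [hm]; exact ha)
          | exact (hfA (x, true)).elim (fun hm => hm) (fun hm => by rw [hm]; exact ha)
          | exact (hgA (x, false)).elim (fun hm => hm) (fun hm => by rw [hm]; exact ha)
          | exact (hgA (x, true)).elim (fun hm => hm) (fun hm => by rw [hm]; exact ha)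
      · exact step_inj hf.invol hg.invol
      · exact step_not_start f g p
    · obtain ⟨x, b⟩ := p
      simp only at hp
      have hxS : x ∉ (↑S.1 : Set α) ∧ x ∉ (↑S.2 : Set α) := by
        constructor <;> (intro hc; apply hp; simp only [hA, Set.mem_union]; tauto)
      have hxU : x ∉ (↑U.1 : Set α) ∧ x ∉ (↑U.2 : Set α) := by
        constructor <;> (intro hc; apply hp; simp only [hA, Set.mem_union]; tauto)
      cases b
      · have hfix := hf.fix (x, false) (not_valid_left hxS)
        refine ⟨1, (x, 0, false), ?_, ?_⟩
        · show (iter (step f g) (start (x, false)) 0).bind (step f g) = _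
          simp [iter, start, step, hfix]
        · simp [step]
      · have hfix := hg.fix (x, true) (not_valid_right hxU)
        refine ⟨1, (x, 2, true), ?_, ?_⟩
        · show (iter (step f g) (start (x, true)) 0).bind (step f g) = _
          simp [iter, start, step, hfix]
        · simp [step]
  obtain ⟨n, st, hit, hnone⟩ := hterm
  refine ⟨(st.1, st.2.2), n, st, ?_, hnone, rfl, ?_⟩
  · rw [seq_eq_iter]; exact hit
  · rcases (step_eq_none_iff f g st).mp hnone with ⟨hl, hb⟩ | ⟨hl, hb⟩ <;> rw [hb, hl] <;> decide

theorem scomp_run {S T U : SignedSet α} {f g : α × Bool → α × Bool}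
    (hf : IsSij S T f) (hg : IsSij T U g) (q : α × Bool) :
    ∃ n st, 1 ≤ n ∧ iter (step f g) (start q) n = some st ∧ step f g st = none ∧
      st = ((scomp f g q).1, if (scomp f g q).2 then 2 else 0, (scomp f g q).2) := by
  have hlast := scomp_isLast (exists_isLast hf hg q)
  obtain ⟨n, st, hseq, hnone, h1, h2⟩ := hlast
  rw [seq_eq_iter] at hseq
  have hn : 1 ≤ n := by
    rcases Nat.eq_zero_or_pos n with rfl | hpos
    · exfalso
      cases hseq
      exact absurd hnone (step_start_ne_none f g q)
    · exact hpos
  refine ⟨n, st, hn, hseq, hnone, ?_⟩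
  obtain ⟨sx, sl, sb⟩ := st
  simp only at h1 h2
  rcases (step_eq_none_iff f g (sx, sl, sb)).mp hnone with ⟨hl, hb⟩ | ⟨hl, hb⟩ <;>
    simp only at hl hb
  · have hy2 : (scomp f g q).2 = false := by
      cases hy : (scomp f g q).2
      · rfl
      · rw [hy] at h2; rw [hl] at h2; exact absurd h2 (by decide)
    simp [h1, hl, hb, hy2]
  · have hy2 : (scomp f g q).2 = true := by
      cases hy : (scomp f g q).2
      · rw [hy] at h2; rw [hl] at h2; exact absurd h2 (by decide)
      · rfl
    simp [h1, hl, hb, hy2]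

end SijAux


namespace SijAux

variable {α : Type}

/-- One step of the full zigzag through `S, T, U, V` with maps `f, g, h`.
Locations: `0 = S`, `1 = T`, `2 = U`, `3 = V`; next map: `0 = f`, `1 = g`, `2 = h`. -/
def step4 (f g h : α × Bool → α × Bool) : α × Fin 4 × Fin 3 → Option (α × Fin 4 × Fin 3) :=
  fun q =>
    match q with
    | (x, loc, nm) =>
      if nm = 0 then
        if loc = 0 then some ((f (x, false)).1, if (f (x, false)).2 then 1 else 0, 1)
        else if loc = 1 then some ((f (x, true)).1, if (f (x, true)).2 then 1 else 0, 1)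
        else none
      else if nm = 1 then
        if loc = 1 then
          some ((g (x, false)).1, if (g (x, false)).2 then 2 else 1,
            if (g (x, false)).2 then 2 else 0)
        else if loc = 2 then
          some ((g (x, true)).1, if (g (x, true)).2 then 2 else 1,
            if (g (x, true)).2 then 2 else 0)
        else none
      else
        if loc = 2 then some ((h (x, false)).1, if (h (x, false)).2 then 3 else 2, 1)
        else if loc = 3 then some ((h (x, true)).1, if (h (x, true)).2 then 3 else 2, 1)
        else none

def start4 (p : α × Bool) : α × Fin 4 × Fin 3 :=
  (p.1, if p.2 then 3 else 0, if p.2 then 2 else 0)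

def IsLast4 (f g h : α × Bool → α × Bool) (p y : α × Bool) : Prop :=
  ∃ n st, iter (step4 f g h) (start4 p) n = some st ∧ step4 f g h st = none ∧
    st.1 = y.1 ∧ st.2.1 = (if y.2 then 3 else 0)

def rstep4 (f g h : α × Bool → α × Bool) : α × Fin 4 × Fin 3 → α × Fin 4 × Fin 3 :=
  fun q =>
    match q with
    | (y, loc, nm) =>
      if nm = 0 then ((g (y, false)).1, if (g (y, false)).2 then 2 else 1, 1)
      else if nm = 2 then ((g (y, true)).1, if (g (y, true)).2 then 2 else 1, 1)
      else if loc = 0 ∨ loc = 1 then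
        ((f (y, decide (loc = 1))).1, if (f (y, decide (loc = 1))).2 then 1 else 0, 0)
      else ((h (y, decide (loc = 3))).1, if (h (y, decide (loc = 3))).2 then 3 else 2, 2)

theorem rstep4_step4 {f g h : α × Bool → α × Bool} (hf : ∀ p, f (f p) = p)
    (hg : ∀ p, g (g p) = p) (hh : ∀ p, h (h p) = p) :
    ∀ a c, step4 f g h a = some c → rstep4 f g h c = a := by
  rintro ⟨x, loc, nm⟩ c hc
  fin_cases loc <;> fin_cases nm <;> simp [step4] at hc
  · rcases hfx : f (x, false) with ⟨z, b⟩
    rw [hfx] at hc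
    have h2 := hf (x, false); rw [hfx] at h2
    subst hc
    cases b <;> simp [rstep4, h2]
  · rcases hfx : f (x, true) with ⟨z, b⟩
    rw [hfx] at hc
    have h2 := hf (x, true); rw [hfx] at h2
    subst hc
    cases b <;> simp [rstep4, h2]
  · rcases hgx : g (x, false) with ⟨z, b⟩
    rw [hgx] at hc
    have h2 := hg (x, false); rw [hgx] at h2
    subst hc
    cases b <;> simp [rstep4, h2]
  · rcases hgx : g (x, true) with ⟨z, b⟩
    rw [hgx] at hc
    have h2 := hg (x, true); rw [hgx] at h2
    subst hc
    cases b <;> simp [rstep4, h2]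
  · rcases hhx : h (x, false) with ⟨z, b⟩
    rw [hhx] at hc
    have h2 := hh (x, false); rw [hhx] at h2
    subst hc
    cases b <;> simp [rstep4, h2]
  · rcases hhx : h (x, true) with ⟨z, b⟩
    rw [hhx] at hc
    have h2 := hh (x, true); rw [hhx] at h2
    subst hc
    cases b <;> simp [rstep4, h2]

theorem step4_inj {f g h : α × Bool → α × Bool} (hf : ∀ p, f (f p) = p)
    (hg : ∀ p, g (g p) = p) (hh : ∀ p, h (h p) = p) :
    ∀ a b c, step4 f g h a = some c → step4 f g h b = some c → a = b := by
  intro a b c ha hb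
  rw [← rstep4_step4 hf hg hh a c ha, ← rstep4_step4 hf hg hh b c hb]

theorem step4_not_start4 (f g h : α × Bool → α × Bool) (p : α × Bool) :
    ∀ a, step4 f g h a ≠ some (start4 p) := by
  rintro ⟨x, loc, nm⟩ hc
  obtain ⟨z, b⟩ := p
  fin_cases loc <;> fin_cases nm <;> cases b <;>
    simp [step4, start4, Prod.ext_iff] at hc
  all_goals (rcases hc with ⟨-, h2, -⟩; split at h2 <;> exact absurd h2 (by decide))

theorem step4_eq_none_iff (f g h : α × Bool → α × Bool) (st : α × Fin 4 × Fin 3) :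
    step4 f g h st = none ↔
      ((st.2.2 = 0 ∧ st.2.1 ≠ 0 ∧ st.2.1 ≠ 1) ∨ (st.2.2 = 1 ∧ st.2.1 ≠ 1 ∧ st.2.1 ≠ 2) ∨
        (st.2.2 = 2 ∧ st.2.1 ≠ 2 ∧ st.2.1 ≠ 3)) := by
  obtain ⟨x, loc, nm⟩ := st
  fin_cases loc <;> fin_cases nm <;> simp [step4]

theorem exists_terminal4 {S T U V : SignedSet α} {f g h : α × Bool → α × Bool}
    (hf : IsSij S T f) (hg : IsSij T U g) (hh : IsSij U V h) (p : α × Bool) :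
    ∃ n st, iter (step4 f g h) (start4 p) n = some st ∧ step4 f g h st = none := by
  classical
  set A : Set α := ↑S.1 ∪ ↑S.2 ∪ ↑T.1 ∪ ↑T.2 ∪ ↑U.1 ∪ ↑U.2 ∪ ↑V.1 ∪ ↑V.2 with hA
  have hAfin : A.Finite := by
    simp only [hA]
    exact (((((((S.1.finite_toSet.union S.2.finite_toSet).union T.1.finite_toSet).union
      T.2.finite_toSet).union U.1.finite_toSet).union U.2.finite_toSet).union
      V.1.finite_toSet).union V.2.finite_toSet)
  have hfA : ∀ q : α × Bool, (f q).1 ∈ A ∨ f q = q := by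
    intro q
    rcases img_mem hf q with hm | hm
    · left; revert hm; simp only [hA, Set.mem_union]; tauto
    · right; exact hm
  have hgA : ∀ q : α × Bool, (g q).1 ∈ A ∨ g q = q := by
    intro q
    rcases img_mem hg q with hm | hm
    · left; revert hm; simp only [hA, Set.mem_union]; tauto
    · right; exact hm
  have hhA : ∀ q : α × Bool, (h q).1 ∈ A ∨ h q = q := by
    intro q
    rcases img_mem hh q with hm | hm
    · left; revert hm; simp only [hA, Set.mem_union]; tauto
    · right; exact hm
  by_cases hp : p.1 ∈ A
  · apply exists_terminal (step4 f g h) (start4 p) {st : α × Fin 4 × Fin 3 | st.1 ∈ A}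
    · exact (hAfin.prod (Set.finite_univ (α := Fin 4 × Fin 3))).subset
        (by rintro ⟨x, lb⟩ hx; exact ⟨hx, trivial⟩)
    · simpa [start4] using hp
    · rintro ⟨x, loc, nm⟩ b ha hb
      simp only [Set.mem_setOf_eq] at ha ⊢
      fin_cases loc <;> fin_cases nm <;> simp [step4] at hb <;> rw [← hb] <;>
        first
        | exact (hfA (x, false)).elim (fun hm => hm) (fun hm => by rw [hm]; exact ha)
        | exact (hfA (x, true)).elim (fun hm => hm) (fun hm => by rw [hm]; exact ha)
        | exact (hgA (x, false)).elim (fun hm => hm) (fun hm => by rw [hm]; exact ha)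
        | exact (hgA (x, true)).elim (fun hm => hm) (fun hm => by rw [hm]; exact ha)
        | exact (hhA (x, false)).elim (fun hm => hm) (fun hm => by rw [hm]; exact ha)
        | exact (hhA (x, true)).elim (fun hm => hm) (fun hm => by rw [hm]; exact ha)
    · exact step4_inj hf.invol hg.invol hh.invol
    · exact step4_not_start4 f g h p
  · obtain ⟨x, b⟩ := p
    simp only at hp
    have hxS : x ∉ (↑S.1 : Set α) ∧ x ∉ (↑S.2 : Set α) := by
      constructor <;> (intro hc; apply hp; simp only [hA, Set.mem_union]; tauto)
    have hxV : x ∉ (↑V.1 : Set α) ∧ x ∉ (↑V.2 : Set α) := by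
      constructor <;> (intro hc; apply hp; simp only [hA, Set.mem_union]; tauto)
    cases b
    · have hfix := hf.fix (x, false) (not_valid_left hxS)
      refine ⟨1, (x, 0, 1), ?_, ?_⟩
      · show (iter (step4 f g h) (start4 (x, false)) 0).bind (step4 f g h) = _
        simp [iter, start4, step4, hfix]
      · simp [step4]
    · have hfix := hh.fix (x, true) (not_valid_right hxV)
      refine ⟨1, (x, 3, 1), ?_, ?_⟩
      · show (iter (step4 f g h) (start4 (x, true)) 0).bind (step4 f g h) = _
        simp [iter, start4, step4, hfix]
      · simp [step4]

theorem isLast4_unique {f g h : α × Bool → α × Bool} {p y y' : α × Bool}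
    (hy : IsLast4 f g h p y) (hy' : IsLast4 f g h p y') : y = y' := by
  obtain ⟨n, st, hseq, hnone, h1, h2⟩ := hy
  obtain ⟨n', st', hseq', hnone', h1', h2'⟩ := hy'
  have hst : st = st' :=
    terminal_unique (step4 f g h) (start4 p) st st' n n' hseq hnone hseq' hnone'
  subst hst
  have e : (if y.2 then (3 : Fin 4) else 0) = (if y'.2 then 3 else 0) := by rw [← h2, ← h2']
  have hb : y.2 = y'.2 := by
    cases hyb : y.2 <;> cases hyb' : y'.2 <;>
      first | rfl | (rw [hyb, hyb'] at e; exact absurd e (by decide))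
  obtain ⟨y1, y2⟩ := y
  obtain ⟨z1, z2⟩ := y'
  simp only [Prod.mk.injEq]
  exact ⟨h1.symm.trans h1', hb⟩

end SijAux


namespace SijAux

variable {α : Type}

/-- Embedding of coarse states (machine `(scomp f g, h)` over `S, U, V`)
into fine states. -/
def iota : α × Fin 3 × Bool → α × Fin 4 × Fin 3 :=
  fun q => match q with
  | (x, loc, nf) =>
    if loc = 0 then (x, 0, if nf then 0 else 1)
    else if loc = 1 then (x, 2, if nf then 1 else 2)
    else (x, 3, if nf then 1 else 2)

/-- Embedding of inner states (machine `(f, g)` over `S, T, U`) into fine states. -/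
def iota' : α × Fin 3 × Bool → α × Fin 4 × Fin 3 :=
  fun q => match q with
  | (x, loc, nf) =>
    (x, if loc = 0 then 0 else if loc = 1 then 1 else 2,
      if loc = 2 then (if nf then 2 else 1) else if nf then 0 else 1)

/-- Embedding of coarse states (machine `(f, scomp g h)` over `S, T, V`)
into fine states. -/
def iota2 : α × Fin 3 × Bool → α × Fin 4 × Fin 3 :=
  fun q => match q with
  | (x, loc, nf) =>
    (x, if loc = 0 then 0 else if loc = 1 then 1 else 3,
      if loc = 2 then (if nf then 1 else 2) else if nf then 0 else 1)

/-- Embedding of inner states (machine `(g, h)` over `T, U, V`) into fine states. -/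
def iota2' : α × Fin 3 × Bool → α × Fin 4 × Fin 3 :=
  fun q => match q with
  | (x, loc, nf) =>
    (x, if loc = 0 then 1 else if loc = 1 then 2 else 3,
      if nf then 1 else if loc = 0 then 0 else 2)

theorem sim1 (f g h : α × Bool → α × Bool) :
    ∀ a b, step f g a = some b → step4 f g h (iota' a) = some (iota' b) := by
  rintro ⟨x, loc, nf⟩ b hb
  fin_cases loc <;> cases nf <;> simp [step] at hb
  · rcases hfx : f (x, false) with ⟨z, c⟩
    rw [hfx] at hb; subst hb
    cases c <;> simp [iota', step4, hfx]
  · rcases hgx : g (x, false) with ⟨z, c⟩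
    rw [hgx] at hb; subst hb
    cases c <;> simp [iota', step4, hgx]
  · rcases hfx : f (x, true) with ⟨z, c⟩
    rw [hfx] at hb; subst hb
    cases c <;> simp [iota', step4, hfx]
  · rcases hgx : g (x, true) with ⟨z, c⟩
    rw [hgx] at hb; subst hb
    cases c <;> simp [iota', step4, hgx]

theorem sim2 (f g h : α × Bool → α × Bool) :
    ∀ a b, step g h a = some b → step4 f g h (iota2' a) = some (iota2' b) := by
  rintro ⟨x, loc, nf⟩ b hb
  fin_cases loc <;> cases nf <;> simp [step] at hb
  · rcases hgx : g (x, false) with ⟨z, c⟩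
    rw [hgx] at hb; subst hb
    cases c <;> simp [iota2', step4, hgx]
  · rcases hhx : h (x, false) with ⟨z, c⟩
    rw [hhx] at hb; subst hb
    cases c <;> simp [iota2', step4, hhx]
  · rcases hgx : g (x, true) with ⟨z, c⟩
    rw [hgx] at hb; subst hb
    cases c <;> simp [iota2', step4, hgx]
  · rcases hhx : h (x, true) with ⟨z, c⟩
    rw [hhx] at hb; subst hb
    cases c <;> simp [iota2', step4, hhx]

theorem exp1_step {S T U : SignedSet α} {f g : α × Bool → α × Bool}
    (hf : IsSij S T f) (hg : IsSij T U g) (h : α × Bool → α × Bool) :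
    ∀ a b, step (scomp f g) h a = some b →
      ∃ k, 1 ≤ k ∧ iter (step4 f g h) (iota a) k = some (iota b) := by
  rintro ⟨x, loc, nf⟩ b hb
  fin_cases loc <;> cases nf <;> simp [step] at hb
  · -- apply `scomp f g` at `(x, false)`
    obtain ⟨n, st, hn, hit, -, hst⟩ := scomp_run hf hg (x, false)
    subst hb hst
    refine ⟨n, hn, ?_⟩
    have hsim := iter_sim (step f g) (step4 f g h) iota' (sim1 f g h) n _ _ hit
    rcases hF : scomp f g (x, false) with ⟨z, c⟩
    rw [hF] at hsim
    cases c <;> simpa [iota, iota', start] using hsim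
  · -- apply `h` at `(x, false)`
    subst hb
    refine ⟨1, le_rfl, ?_⟩
    rcases hH : h (x, false) with ⟨z, c⟩
    show (iter (step4 f g h) _ 0).bind (step4 f g h) = _
    cases c <;> simp [iter, iota, step4, hH]
  · -- apply `scomp f g` at `(x, true)`
    obtain ⟨n, st, hn, hit, -, hst⟩ := scomp_run hf hg (x, true)
    subst hb hst
    refine ⟨n, hn, ?_⟩
    have hsim := iter_sim (step f g) (step4 f g h) iota' (sim1 f g h) n _ _ hit
    rcases hF : scomp f g (x, true) with ⟨z, c⟩
    rw [hF] at hsim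
    cases c <;> simpa [iota, iota', start] using hsim
  · -- apply `h` at `(x, true)`
    subst hb
    refine ⟨1, le_rfl, ?_⟩
    rcases hH : h (x, true) with ⟨z, c⟩
    show (iter (step4 f g h) _ 0).bind (step4 f g h) = _
    cases c <;> simp [iter, iota, step4, hH]

theorem exp2_step {T U V : SignedSet α} {g h : α × Bool → α × Bool}
    (hg : IsSij T U g) (hh : IsSij U V h) (f : α × Bool → α × Bool) :
    ∀ a b, step f (scomp g h) a = some b →
      ∃ k, 1 ≤ k ∧ iter (step4 f g h) (iota2 a) k = some (iota2 b) := by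
  rintro ⟨x, loc, nf⟩ b hb
  fin_cases loc <;> cases nf <;> simp [step] at hb
  · -- apply `f` at `(x, false)`
    subst hb
    refine ⟨1, le_rfl, ?_⟩
    rcases hF : f (x, false) with ⟨z, c⟩
    show (iter (step4 f g h) _ 0).bind (step4 f g h) = _
    cases c <;> simp [iter, iota2, step4, hF]
  · -- apply `scomp g h` at `(x, false)`
    obtain ⟨n, st, hn, hit, -, hst⟩ := scomp_run hg hh (x, false)
    subst hb hst
    refine ⟨n, hn, ?_⟩
    have hsim := iter_sim (step g h) (step4 f g h) iota2' (sim2 f g h) n _ _ hit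
    rcases hG : scomp g h (x, false) with ⟨z, c⟩
    rw [hG] at hsim
    cases c <;> simpa [iota2, iota2', start] using hsim
  · -- apply `f` at `(x, true)`
    subst hb
    refine ⟨1, le_rfl, ?_⟩
    rcases hF : f (x, true) with ⟨z, c⟩
    show (iter (step4 f g h) _ 0).bind (step4 f g h) = _
    cases c <;> simp [iter, iota2, step4, hF]
  · -- apply `scomp g h` at `(x, true)`
    obtain ⟨n, st, hn, hit, -, hst⟩ := scomp_run hg hh (x, true)
    subst hb hst
    refine ⟨n, hn, ?_⟩
    have hsim := iter_sim (step g h) (step4 f g h) iota2' (sim2 f g h) n _ _ hit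
    rcases hG : scomp g h (x, true) with ⟨z, c⟩
    rw [hG] at hsim
    cases c <;> simpa [iota2, iota2', start] using hsim

theorem iota_start (p : α × Bool) : iota (start p) = start4 p := by
  obtain ⟨x, b⟩ := p
  cases b <;> simp [iota, start, start4]

theorem iota2_start (p : α × Bool) : iota2 (start p) = start4 p := by
  obtain ⟨x, b⟩ := p
  cases b <;> simp [iota2, start, start4]

end SijAux


namespace SijAux

variable {α : Type}

theorem coarse_term {β γ : Type*} (σ : β → Option β) (τ : γ → Option γ) (ι : β → γ) (s₀ : β)
    (hexp : ∀ a b, σ a = some b → ∃ k, 1 ≤ k ∧ iter τ (ι a) k = some (ι b))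
    (hfin : ∃ N st, iter τ (ι s₀) N = some st ∧ τ st = none) :
    ∃ n st, iter σ s₀ n = some st ∧ σ st = none := by
  obtain ⟨N, stN, hN, hNnone⟩ := hfin
  by_contra hcon
  push_neg at hcon
  have hall : ∀ n, ∃ st m, iter σ s₀ n = some st ∧ n ≤ m ∧ iter τ (ι s₀) m = some (ι st) := by
    intro n
    induction n with
    | zero => exact ⟨s₀, 0, rfl, le_rfl, rfl⟩
    | succ n ih =>
        obtain ⟨st, m, hs, hm, hτ⟩ := ih
        obtain ⟨st', hst'⟩ := Option.ne_none_iff_exists'.mp (hcon n st hs)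
        obtain ⟨k, hk1, hk2⟩ := hexp st st' hst'
        refine ⟨st', m + k, ?_, by omega, ?_⟩
        · rw [iter, hs]; simpa using hst'
        · rw [iter_add, hτ]; simpa using hk2
  obtain ⟨st, m, hs, hm, hτ⟩ := hall (N + 1)
  have hnone : iter τ (ι s₀) m = none :=
    iter_none_of_terminal τ (ι s₀) stN N m hN hNnone (by omega)
  rw [hnone] at hτ
  cases hτ

theorem exists_isLast_of_term {f g : α × Bool → α × Bool} {p : α × Bool}
    (hterm : ∃ n st, iter (step f g) (start p) n = some st ∧ step f g st = none) :
    ∃ y, IsLast f g p y := by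
  obtain ⟨n, st, hit, hnone⟩ := hterm
  refine ⟨(st.1, st.2.2), n, st, ?_, hnone, rfl, ?_⟩
  · rw [seq_eq_iter]; exact hit
  · rcases (step_eq_none_iff f g st).mp hnone with ⟨hl, hb⟩ | ⟨hl, hb⟩ <;> rw [hb, hl] <;> decide

theorem exp1 {S T U : SignedSet α} {f g : α × Bool → α × Bool} (hf : IsSij S T f)
    (hg : IsSij T U g) (h : α × Bool → α × Bool) {p y : α × Bool}
    (hy : IsLast (scomp f g) h p y) : IsLast4 f g h p y := by
  obtain ⟨n, st, hseq, hnone, h1, h2⟩ := hy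
  rw [seq_eq_iter] at hseq
  have hreach : ∀ m st', iter (step (scomp f g) h) (start p) m = some st' →
      ∃ k, iter (step4 f g h) (start4 p) k = some (iota st') := by
    intro m
    induction m with
    | zero =>
        intro st' hst'
        cases hst'
        refine ⟨0, ?_⟩
        rw [show iter (step4 f g h) (start4 p) 0 = some (start4 p) from rfl, iota_start]
    | succ m ih =>
        intro st' hst'
        rw [iter] at hst'
        rcases Option.bind_eq_some_iff.mp hst' with ⟨c, hc1, hc2⟩
        obtain ⟨k, hk⟩ := ih c hc1
        obtain ⟨k', -, hk'⟩ := exp1_step hf hg h c st' hc2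
        exact ⟨k + k', by rw [iter_add, hk]; simpa using hk'⟩
  obtain ⟨k, hk⟩ := hreach n st hseq
  obtain ⟨sx, sl, sb⟩ := st
  rcases (step_eq_none_iff _ _ (sx, sl, sb)).mp hnone with ⟨hl, hbf⟩ | ⟨hl, hbf⟩
  · have hl' : sl = 0 := hl
    have hbf' : sb = false := hbf
    subst hl' hbf'
    have hy2 : y.2 = false := by
      cases hc : y.2
      · rfl
      · exfalso; rw [hc] at h2; simp at h2
    exact ⟨k, (sx, 0, 1), by simpa [iota] using hk, by simp [step4], h1, by simp [hy2]⟩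
  · have hl' : sl = 2 := hl
    have hbf' : sb = true := hbf
    subst hl' hbf'
    have hy2 : y.2 = true := by
      cases hc : y.2
      · exfalso; rw [hc] at h2; simp at h2
      · rfl
    exact ⟨k, (sx, 3, 1), by simpa [iota] using hk, by simp [step4], h1, by simp [hy2]⟩

theorem exp2 {T U V : SignedSet α} {g h : α × Bool → α × Bool} (hg : IsSij T U g)
    (hh : IsSij U V h) (f : α × Bool → α × Bool) {p y : α × Bool}
    (hy : IsLast f (scomp g h) p y) : IsLast4 f g h p y := by
  obtain ⟨n, st, hseq, hnone, h1, h2⟩ := hy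
  rw [seq_eq_iter] at hseq
  have hreach : ∀ m st', iter (step f (scomp g h)) (start p) m = some st' →
      ∃ k, iter (step4 f g h) (start4 p) k = some (iota2 st') := by
    intro m
    induction m with
    | zero =>
        intro st' hst'
        cases hst'
        refine ⟨0, ?_⟩
        rw [show iter (step4 f g h) (start4 p) 0 = some (start4 p) from rfl, iota2_start]
    | succ m ih =>
        intro st' hst'
        rw [iter] at hst'
        rcases Option.bind_eq_some_iff.mp hst' with ⟨c, hc1, hc2⟩
        obtain ⟨k, hk⟩ := ih c hc1
        obtain ⟨k', -, hk'⟩ := exp2_step hg hh f c st' hc2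
        exact ⟨k + k', by rw [iter_add, hk]; simpa using hk'⟩
  obtain ⟨k, hk⟩ := hreach n st hseq
  obtain ⟨sx, sl, sb⟩ := st
  rcases (step_eq_none_iff _ _ (sx, sl, sb)).mp hnone with ⟨hl, hbf⟩ | ⟨hl, hbf⟩
  · have hl' : sl = 0 := hl
    have hbf' : sb = false := hbf
    subst hl' hbf'
    have hy2 : y.2 = false := by
      cases hc : y.2
      · rfl
      · exfalso; rw [hc] at h2; simp at h2
    exact ⟨k, (sx, 0, 1), by simpa [iota2] using hk, by simp [step4], h1, by simp [hy2]⟩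
  · have hl' : sl = 2 := hl
    have hbf' : sb = true := hbf
    subst hl' hbf'
    have hy2 : y.2 = true := by
      cases hc : y.2
      · exfalso; rw [hc] at h2; simp at h2
      · rfl
    exact ⟨k, (sx, 3, 1), by simpa [iota2] using hk, by simp [step4], h1, by simp [hy2]⟩

theorem assoc {S T U V : SignedSet α} {f g h : α × Bool → α × Bool}
    (hf : IsSij S T f) (hg : IsSij T U g) (hh : IsSij U V h) :
    ∀ p, scomp (scomp f g) h p = scomp f (scomp g h) p := by
  intro p
  have hex1 : ∃ y, IsLast (scomp f g) h p y := by
    apply exists_isLast_of_term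
    exact coarse_term _ _ iota (start p) (exp1_step hf hg h)
      (by rw [iota_start]; exact exists_terminal4 hf hg hh p)
  have hex2 : ∃ y, IsLast f (scomp g h) p y := by
    apply exists_isLast_of_term
    exact coarse_term _ _ iota2 (start p) (exp2_step hg hh f)
      (by rw [iota2_start]; exact exists_terminal4 hf hg hh p)
  exact isLast4_unique (exp1 hf hg h (scomp_isLast hex1)) (exp2 hg hh f (scomp_isLast hex2))

end SijAux

/-- Composition of sijections is associative: for sijections `φ : S ⇒ T`, `ψ : T ⇒ U`
and `ξ : U ⇒ V`, one has `ξ ∘ (ψ ∘ φ) = (ξ ∘ ψ) ∘ φ` (as sijections from `S` to `V`,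
i.e. as maps on the support of `S ⊔ V`). -/
theorem scomp_assoc {S T U V : SignedSet α} {f g h : α × Bool → α × Bool}
    (hf : IsSij S T f) (hg : IsSij T U g) (hh : IsSij U V h) :
    ∀ p, valid S V p → scomp (scomp f g) h p = scomp f (scomp g h) p := by
  intro p _
  exact SijAux.assoc hf hg hh p
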